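/- Let H be a Hopf algebra with bijective antipode S, J a normalized twist, Q_J = Σ S(J⁽¹⁾)·J⁽²⁾, and u_J = Q_J⁻¹·S(Q_J). Then Δ(u_J) = J·(u_J ⊗ u_J)·(S² ⊗ S²)(J⁻¹). -/

import Mathlib

open TensorProduct

noncomputable section
variable (K B : Type*) [Field K] [Ring B] [Bialgebra K B]

/-- `ε ⊗ id : B ⊗ B → B`. -/
def epsId : B ⊗[K] B →ₐ[K] B :=
  (Algebra.TensorProduct.lid K B).toAlgHom.comp
    (Algebra.TensorProduct.map (Bialgebra.counitAlgHom K B) (AlgHom.id K B))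

/-- `id ⊗ ε : B ⊗ B → B`. -/
def idEps : B ⊗[K] B →ₐ[K] B :=
  (Algebra.TensorProduct.rid K K B).toAlgHom.comp
    (Algebra.TensorProduct.map (AlgHom.id K B) (Bialgebra.counitAlgHom K B))

/-- `Δ ⊗ id`, landing in `B ⊗ (B ⊗ B)`. -/
def comulId : B ⊗[K] B →ₐ[K] B ⊗[K] (B ⊗[K] B) :=
  (Algebra.TensorProduct.assoc K K K B B B).toAlgHom.comp
    (Algebra.TensorProduct.map (Bialgebra.comulAlgHom K B) (AlgHom.id K B))

/-- `id ⊗ Δ`, landing in `B ⊗ (B ⊗ B)`. -/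
def idComul : B ⊗[K] B →ₐ[K] B ⊗[K] (B ⊗[K] B) :=
  Algebra.TensorProduct.map (AlgHom.id K B) (Bialgebra.comulAlgHom K B)

/-- The cocycle condition `(Δ ⊗ id)(J)·(J ⊗ 1) = (id ⊗ Δ)(J)·(1 ⊗ J)` for a twist. -/
def IsTwist (J : B ⊗[K] B) : Prop :=
  comulId K B J * (Algebra.TensorProduct.assoc K K K B B B (J ⊗ₜ 1)) =
    idComul K B J * ((1 : B) ⊗ₜ J)

/-- Normalization `(ε ⊗ id)(J) = (id ⊗ ε)(J) = 1`. -/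
def IsNormalized (J : B ⊗[K] B) : Prop :=
  epsId K B J = 1 ∧ idEps K B J = 1

/-- The twisted comultiplication `a ↦ J⁻¹·Δ(a)·J` (with `J'` playing the role of `J⁻¹`). -/
def comulJ (J' J : B ⊗[K] B) : B →ₗ[K] B ⊗[K] B :=
  LinearMap.mulLeft K J' ∘ₗ LinearMap.mulRight K J ∘ₗ Coalgebra.comul

end

noncomputable section
variable (K B : Type*) [Field K] [Ring B] [HopfAlgebra K B]

/-- The antipode as a linear map. -/
def anti : B →ₗ[K] B := HopfAlgebra.antipode (R := K) (A := B)

/-- `Q_J = Σ S(J⁽¹⁾)·J⁽²⁾`. -/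
def QJ (J : B ⊗[K] B) : B := LinearMap.mul' K B ((anti K B).rTensor B J)

/-- `Σ J'⁽¹⁾·S(J'⁽²⁾)`; for `J' = J⁻¹` this is the inverse of `Q_J`. -/
def QJinv (J' : B ⊗[K] B) : B := LinearMap.mul' K B ((anti K B).lTensor B J')

/-- The twisted antipode `a ↦ Q_J⁻¹·S(a)·Q_J` (with `J'` playing the role of `J⁻¹`). -/
def antiJ (J' J : B ⊗[K] B) : B →ₗ[K] B :=
  LinearMap.mulLeft K (QJinv K B J') ∘ₗ LinearMap.mulRight K (QJ K B J) ∘ₗ anti K B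

end

noncomputable section Conv
variable {K H : Type*} [Field K] [Ring H] [HopfAlgebra K H]
variable {A : Type*} [AddCommGroup A] [Module K A]

def cmul (μ : A →ₗ[K] A →ₗ[K] A) (f g : H →ₗ[K] A) : H →ₗ[K] A :=
  TensorProduct.lift μ ∘ₗ TensorProduct.map f g ∘ₗ Coalgebra.comul

def cunit (e : A) : H →ₗ[K] A :=
  LinearMap.toSpanSingleton K A e ∘ₗ (Coalgebra.counit (R := K))

lemma cunit_apply (e : A) (a : H) : cunit (K := K) e a = Coalgebra.counit (R := K) a • e := rfl

lemma cmul_repr (μ : A →ₗ[K] A →ₗ[K] A) (f g : H →ₗ[K] A) {a : H}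
    (r : Coalgebra.Repr K a (H × H)) :
    cmul μ f g a = ∑ i ∈ r.index, μ (f (r.left i)) (g (r.right i)) := by
  simp only [cmul, LinearMap.comp_apply, ← r.eq, map_sum, TensorProduct.map_tmul,
    TensorProduct.lift.tmul]

def cmulL (μ : A →ₗ[K] A →ₗ[K] A) :
    (H →ₗ[K] A) →ₗ[K] (H →ₗ[K] A) →ₗ[K] (H →ₗ[K] A) :=
  LinearMap.mk₂ K (cmul μ)
    (fun f f' g => by unfold cmul; rw [TensorProduct.map_add_left]; ext a; simp)
    (fun c f g => by unfold cmul; rw [TensorProduct.map_smul_left]; ext a; simp)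
    (fun f g g' => by unfold cmul; rw [TensorProduct.map_add_right]; ext a; simp)
    (fun c f g => by unfold cmul; rw [TensorProduct.map_smul_right]; ext a; simp)

@[simp] lemma cmulL_apply (μ : A →ₗ[K] A →ₗ[K] A) (f g : H →ₗ[K] A) :
    cmulL μ f g = cmul μ f g := rfl

lemma cmul_assoc (μ : A →ₗ[K] A →ₗ[K] A)
    (hassoc : ∀ x y z : A, μ (μ x y) z = μ x (μ y z)) (f g h : H →ₗ[K] A) :
    cmul μ (cmul μ f g) h = cmul μ f (cmul μ g h) := by
  ext a
  set r : Coalgebra.Repr K a (H × H) := Coalgebra.Repr.arbitrary K a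
  set r₁ : (i : H × H) → Coalgebra.Repr K (r.left i) (H × H) := fun i => Coalgebra.Repr.arbitrary K _
  set r₂ : (i : H × H) → Coalgebra.Repr K (r.right i) (H × H) := fun i => Coalgebra.Repr.arbitrary K _
  have key := Coalgebra.sum_map_tmul_tmul_eq (R := K) (f := f) (g := g) (h := h) a
    (repr := r) (a₁ := r₁) (a₂ := r₂)
  have key2 := congrArg (TensorProduct.lift (μ.compl₂ (TensorProduct.lift μ))) key
  simp only [map_sum, TensorProduct.lift.tmul, LinearMap.compl₂_apply] at key2
  calc cmul μ (cmul μ f g) h a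
      = ∑ i ∈ r.index, μ (cmul μ f g (r.left i)) (h (r.right i)) := cmul_repr μ _ h r
    _ = ∑ i ∈ r.index, ∑ j ∈ (r₁ i).index,
          μ (μ (f ((r₁ i).left j)) (g ((r₁ i).right j))) (h (r.right i)) := by
        refine Finset.sum_congr rfl fun i _ => ?_
        rw [cmul_repr μ f g (r₁ i), map_sum, LinearMap.sum_apply]
    _ = ∑ i ∈ r.index, ∑ j ∈ (r₁ i).index,
          μ (f ((r₁ i).left j)) (μ (g ((r₁ i).right j)) (h (r.right i))) := by
        simp_rw [hassoc]
    _ = ∑ i ∈ r.index, ∑ j ∈ (r₂ i).index,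
          μ (f (r.left i)) (μ (g ((r₂ i).left j)) (h ((r₂ i).right j))) := key2.symm
    _ = cmul μ f (cmul μ g h) a := by
        rw [cmul_repr μ f _ r]
        refine Finset.sum_congr rfl fun i _ => ?_
        rw [cmul_repr μ g h (r₂ i), map_sum]

lemma one_cmul (μ : A →ₗ[K] A →ₗ[K] A) (e : A) (he : ∀ x : A, μ e x = x) (f : H →ₗ[K] A) :
    cmul μ (cunit e) f = f := by
  ext a
  set r : Coalgebra.Repr K a (H × H) := Coalgebra.Repr.arbitrary K a
  have key := Coalgebra.sum_counit_tmul_eq (R := K) r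
  have key2 := congrArg (TensorProduct.lift ((LinearMap.lsmul K A).compl₂ f)) key
  simp only [map_sum, TensorProduct.lift.tmul, LinearMap.compl₂_apply, LinearMap.lsmul_apply,
    one_smul] at key2
  rw [cmul_repr μ _ f r]
  calc ∑ i ∈ r.index, μ (cunit e (r.left i)) (f (r.right i))
      = ∑ i ∈ r.index, Coalgebra.counit (R := K) (r.left i) • f (r.right i) := by
        refine Finset.sum_congr rfl fun i _ => ?_
        rw [cunit_apply, map_smul, LinearMap.smul_apply, he]
    _ = f a := key2

lemma cmul_one (μ : A →ₗ[K] A →ₗ[K] A) (e : A) (he : ∀ x : A, μ x e = x) (f : H →ₗ[K] A) :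
    cmul μ f (cunit e) = f := by
  ext a
  set r : Coalgebra.Repr K a (H × H) := Coalgebra.Repr.arbitrary K a
  have key := Coalgebra.sum_tmul_counit_eq (R := K) r
  have key2 := congrArg (TensorProduct.lift (((LinearMap.lsmul K A).compl₂ f).flip)) key
  simp only [map_sum, TensorProduct.lift.tmul, LinearMap.flip_apply, LinearMap.compl₂_apply,
    LinearMap.lsmul_apply, one_smul] at key2
  rw [cmul_repr μ f _ r]
  calc ∑ i ∈ r.index, μ (f (r.left i)) (cunit e (r.right i))
      = ∑ i ∈ r.index, Coalgebra.counit (R := K) (r.right i) • f (r.left i) := by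
        refine Finset.sum_congr rfl fun i _ => ?_
        rw [cunit_apply, map_smul, he]
    _ = f a := key2

lemma cinv_unique (μ : A →ₗ[K] A →ₗ[K] A) (e : A)
    (hassoc : ∀ x y z : A, μ (μ x y) z = μ x (μ y z))
    (hel : ∀ x : A, μ e x = x) (her : ∀ x : A, μ x e = x)
    {f g h : H →ₗ[K] A} (h1 : cmul μ h f = cunit e) (h2 : cmul μ f g = cunit e) :
    h = g := by
  have key := cmul_assoc μ hassoc h f g
  rw [h1, h2, one_cmul μ e hel, cmul_one μ e her] at key
  exact key.symm

end Conv

section B2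
variable {K H : Type*} [Field K] [Ring H] [HopfAlgebra K H]

lemma anti_one : anti K H 1 = 1 := by
  have := HopfAlgebra.mul_antipode_rTensor_comul_apply (R := K) (a := (1 : H))
  rw [Bialgebra.comul_one, Algebra.TensorProduct.one_def] at this
  simpa [anti] using this


lemma cunit2_apply (a b : H) :
    cunit (K := K) ((cunit (1 : H) : H →ₗ[K] H)) a b
      = Coalgebra.counit (R := K) a • Coalgebra.counit (R := K) b • (1 : H) := by
  simp [cunit_apply]

/-- `F ⋆ G = 1` where `F a b = a*b`, `G a b = S(a*b)`. -/
lemma conv_mul_antimul :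
    cmul (cmulL (LinearMap.mul K H)) (LinearMap.mul K H)
      ((LinearMap.llcomp K H H H (anti K H)) ∘ₗ LinearMap.mul K H)
    = cunit (cunit (1 : H)) := by
  ext a b
  set r : Coalgebra.Repr K a (H × H) := Coalgebra.Repr.arbitrary K a
  set s : Coalgebra.Repr K b (H × H) := Coalgebra.Repr.arbitrary K b
  rw [cmul_repr _ _ _ r, LinearMap.sum_apply]
  have step1 : ∀ i ∈ r.index,
      (cmulL (LinearMap.mul K H) (LinearMap.mul K H (r.left i))
        (((LinearMap.llcomp K H H H (anti K H)) ∘ₗ LinearMap.mul K H) (r.right i))) b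
      = ∑ j ∈ s.index, (r.left i * s.left j) * anti K H (r.right i * s.right j) := by
    intro i _
    rw [cmulL_apply, cmul_repr _ _ _ s]
    simp [LinearMap.mul_apply']
  rw [Finset.sum_congr rfl step1]
  have key : ∑ i ∈ r.index, ∑ j ∈ s.index,
      (r.left i * s.left j) ⊗ₜ[K] (r.right i * s.right j) = Coalgebra.comul (R := K) (a * b) := by
    rw [Bialgebra.comul_mul, ← r.eq, ← s.eq, Finset.sum_mul_sum]
    simp [Algebra.TensorProduct.tmul_mul_tmul]
  have key2 := congrArg (LinearMap.mul' K H ∘ₗ LinearMap.lTensor H (anti K H)) key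
  simp only [map_sum, LinearMap.comp_apply, LinearMap.lTensor_tmul, LinearMap.mul'_apply] at key2
  rw [key2]
  have key3 := HopfAlgebra.mul_antipode_lTensor_comul_apply (R := K) (a := a * b)
  rw [show (LinearMap.lTensor H (anti K H)) = (HopfAlgebra.antipode (R := K)).lTensor H from rfl,
    key3, cunit2_apply, Bialgebra.counit_mul, Algebra.algebraMap_eq_smul_one, smul_smul]

/-- `Hm ⋆ F = 1` where `Hm a b = S(b) * S(a)`. -/
lemma conv_antimul_mul :
    cmul (cmulL (LinearMap.mul K H))
      ((LinearMap.lcomp K H (anti K H)) ∘ₗ (LinearMap.mul K H).flip ∘ₗ anti K H)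
      (LinearMap.mul K H)
    = cunit (cunit (1 : H)) := by
  ext a b
  set r : Coalgebra.Repr K a (H × H) := Coalgebra.Repr.arbitrary K a
  set s : Coalgebra.Repr K b (H × H) := Coalgebra.Repr.arbitrary K b
  rw [cmul_repr _ _ _ r, LinearMap.sum_apply]
  have step1 : ∀ i ∈ r.index,
      (cmulL (LinearMap.mul K H)
        (((LinearMap.lcomp K H (anti K H)) ∘ₗ (LinearMap.mul K H).flip ∘ₗ anti K H) (r.left i))
        (LinearMap.mul K H (r.right i))) b
      = ∑ j ∈ s.index, (anti K H (s.left j) * anti K H (r.left i)) * (r.right i * s.right j) := by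
    intro i _
    rw [cmulL_apply, cmul_repr _ _ _ s]
    simp [LinearMap.mul_apply']
  rw [Finset.sum_congr rfl step1, Finset.sum_comm]
  have collapse : (∑ i ∈ r.index, anti K H (r.left i) * r.right i)
      = Coalgebra.counit (R := K) a • (1 : H) := by
    have := HopfAlgebra.sum_antipode_mul_eq_algebraMap_counit (R := K) r
    rw [show (∑ i ∈ r.index, anti K H (r.left i) * r.right i)
        = ∑ i ∈ r.index, HopfAlgebra.antipode (R := K) (r.left i) * r.right i from rfl, this,
      Algebra.algebraMap_eq_smul_one]
  have collapse2 : (∑ j ∈ s.index, anti K H (s.left j) * s.right j)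
      = Coalgebra.counit (R := K) b • (1 : H) := by
    have := HopfAlgebra.sum_antipode_mul_eq_algebraMap_counit (R := K) s
    rw [show (∑ j ∈ s.index, anti K H (s.left j) * s.right j)
        = ∑ j ∈ s.index, HopfAlgebra.antipode (R := K) (s.left j) * s.right j from rfl, this,
      Algebra.algebraMap_eq_smul_one]
  have inner : ∀ j ∈ s.index,
      ∑ i ∈ r.index, (anti K H (s.left j) * anti K H (r.left i)) * (r.right i * s.right j)
      = Coalgebra.counit (R := K) a • (anti K H (s.left j) * s.right j) := by
    intro j _
    have : ∑ i ∈ r.index, (anti K H (s.left j) * anti K H (r.left i)) * (r.right i * s.right j)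
        = anti K H (s.left j) *
            ((∑ i ∈ r.index, anti K H (r.left i) * r.right i) * s.right j) := by
      rw [Finset.sum_mul, Finset.mul_sum]
      exact Finset.sum_congr rfl fun i _ => by simp [mul_assoc]
    rw [this, collapse]
    simp [smul_mul_assoc, mul_smul_comm]
  rw [Finset.sum_congr rfl inner, ← Finset.smul_sum, collapse2, cunit2_apply]

end B2

section B3
variable {K H : Type*} [Field K] [Ring H] [HopfAlgebra K H]

lemma anti_mul (x y : H) : anti K H (x * y) = anti K H y * anti K H x := by
  have hassoc : ∀ f g h : H →ₗ[K] H,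
      cmulL (LinearMap.mul K H) (cmulL (LinearMap.mul K H) f g) h
        = cmulL (LinearMap.mul K H) f (cmulL (LinearMap.mul K H) g h) := by
    intro f g h
    simp only [cmulL_apply]
    exact cmul_assoc _ (fun x y z => mul_assoc x y z) f g h
  have hel : ∀ f : H →ₗ[K] H, cmulL (LinearMap.mul K H) ((cunit (1 : H) : H →ₗ[K] H)) f = f := by
    intro f; simp only [cmulL_apply]; exact one_cmul _ _ one_mul f
  have her : ∀ f : H →ₗ[K] H, cmulL (LinearMap.mul K H) f ((cunit (1 : H) : H →ₗ[K] H)) = f := by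
    intro f; simp only [cmulL_apply]; exact cmul_one _ _ mul_one f
  have key := cinv_unique (cmulL (LinearMap.mul K H)) ((cunit (1 : H) : H →ₗ[K] H))
    hassoc hel her (conv_antimul_mul (K := K) (H := H)) (conv_mul_antimul (K := K) (H := H))
  have := congrFun (congrArg DFunLike.coe (congrFun (congrArg DFunLike.coe key) x)) y
  simpa using this.symm

variable (K H)

/-- `x ⊗ y ↦ S y ⊗ S x`. -/
noncomputable def swL : H ⊗[K] H →ₗ[K] H ⊗[K] H :=
  TensorProduct.map (anti K H) (anti K H) ∘ₗ (TensorProduct.comm K H H).toLinearMap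

variable {K H}

@[simp] lemma swL_tmul (x y : H) : swL K H (x ⊗ₜ y) = anti K H y ⊗ₜ anti K H x := rfl

section Bmaps
variable (K H)
noncomputable def j1 : H →ₗ[K] H ⊗[K] H := (TensorProduct.mk K H H).flip 1
noncomputable def j2 : H →ₗ[K] H ⊗[K] H := TensorProduct.mk K H H 1
end Bmaps

@[simp] lemma j1_apply (x : H) : j1 K H x = x ⊗ₜ 1 := rfl
@[simp] lemma j2_apply (x : H) : j2 K H x = 1 ⊗ₜ x := rfl

local notation "μT" => LinearMap.mul K (H ⊗[K] H)

lemma conv_j1S_j1 : cmul μT (j1 K H ∘ₗ anti K H) (j1 K H) = cunit 1 := by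
  ext a
  set r : Coalgebra.Repr K a (H × H) := Coalgebra.Repr.arbitrary K a
  rw [cmul_repr _ _ _ r, cunit_apply]
  have : ∀ i ∈ r.index,
      μT ((j1 K H ∘ₗ anti K H) (r.left i)) (j1 K H (r.right i))
        = (anti K H (r.left i) * r.right i) ⊗ₜ[K] (1 : H) := by
    intro i _
    simp [LinearMap.mul_apply', Algebra.TensorProduct.tmul_mul_tmul]
  rw [Finset.sum_congr rfl this, ← TensorProduct.sum_tmul,
    show (∑ i ∈ r.index, anti K H (r.left i) * r.right i)
      = ∑ i ∈ r.index, HopfAlgebra.antipode (R := K) (r.left i) * r.right i from rfl,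
    HopfAlgebra.sum_antipode_mul_eq_algebraMap_counit r, Algebra.TensorProduct.one_def,
    Algebra.algebraMap_eq_smul_one, TensorProduct.smul_tmul']

lemma conv_j2S_j2 : cmul μT (j2 K H ∘ₗ anti K H) (j2 K H) = cunit 1 := by
  ext a
  set r : Coalgebra.Repr K a (H × H) := Coalgebra.Repr.arbitrary K a
  rw [cmul_repr _ _ _ r, cunit_apply]
  have : ∀ i ∈ r.index,
      μT ((j2 K H ∘ₗ anti K H) (r.left i)) (j2 K H (r.right i))
        = (1 : H) ⊗ₜ[K] (anti K H (r.left i) * r.right i) := by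
    intro i _
    simp [LinearMap.mul_apply', Algebra.TensorProduct.tmul_mul_tmul]
  rw [Finset.sum_congr rfl this, ← TensorProduct.tmul_sum,
    show (∑ i ∈ r.index, anti K H (r.left i) * r.right i)
      = ∑ i ∈ r.index, HopfAlgebra.antipode (R := K) (r.left i) * r.right i from rfl,
    HopfAlgebra.sum_antipode_mul_eq_algebraMap_counit r, Algebra.TensorProduct.one_def,
    Algebra.algebraMap_eq_smul_one, TensorProduct.tmul_smul]

lemma conv_j1_j2 : cmul μT (j1 K H) (j2 K H) = Coalgebra.comul := by
  ext a
  set r : Coalgebra.Repr K a (H × H) := Coalgebra.Repr.arbitrary K a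
  rw [cmul_repr _ _ _ r]
  have : ∀ i ∈ r.index,
      μT (j1 K H (r.left i)) (j2 K H (r.right i)) = r.left i ⊗ₜ[K] r.right i := by
    intro i _
    simp [LinearMap.mul_apply', Algebra.TensorProduct.tmul_mul_tmul]
  rw [Finset.sum_congr rfl this, r.eq]

lemma conv_j2S_j1S :
    cmul μT (j2 K H ∘ₗ anti K H) (j1 K H ∘ₗ anti K H) = swL K H ∘ₗ Coalgebra.comul := by
  ext a
  set r : Coalgebra.Repr K a (H × H) := Coalgebra.Repr.arbitrary K a
  rw [cmul_repr _ _ _ r]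
  have : ∀ i ∈ r.index,
      μT ((j2 K H ∘ₗ anti K H) (r.left i)) ((j1 K H ∘ₗ anti K H) (r.right i))
        = anti K H (r.right i) ⊗ₜ[K] anti K H (r.left i) := by
    intro i _
    simp [LinearMap.mul_apply', Algebra.TensorProduct.tmul_mul_tmul]
  rw [Finset.sum_congr rfl this]
  rw [LinearMap.comp_apply, ← r.eq, map_sum]
  simp

lemma conv_comul_comulS :
    cmul μT (Coalgebra.comul) (Coalgebra.comul ∘ₗ anti K H) = cunit 1 := by
  ext a
  set r : Coalgebra.Repr K a (H × H) := Coalgebra.Repr.arbitrary K a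
  rw [cmul_repr _ _ _ r, cunit_apply]
  have : ∀ i ∈ r.index,
      μT (Coalgebra.comul (r.left i)) ((Coalgebra.comul ∘ₗ anti K H) (r.right i))
        = Coalgebra.comul (R := K) (r.left i * anti K H (r.right i)) := by
    intro i _
    simp [LinearMap.mul_apply', Bialgebra.comul_mul]
  rw [Finset.sum_congr rfl this, ← map_sum,
    show (∑ i ∈ r.index, r.left i * anti K H (r.right i))
      = ∑ i ∈ r.index, r.left i * HopfAlgebra.antipode (R := K) (r.right i) from rfl,
    HopfAlgebra.sum_mul_antipode_eq_algebraMap_counit r, Bialgebra.comul_algebraMap,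
    Algebra.algebraMap_eq_smul_one]

section Chain

lemma muT_assoc : ∀ x y z : H ⊗[K] H, μT (μT x y) z = μT x (μT y z) :=
  fun x y z => mul_assoc x y z
lemma muT_onel : ∀ x : H ⊗[K] H, μT 1 x = x := fun x => one_mul x
lemma muT_oner : ∀ x : H ⊗[K] H, μT x 1 = x := fun x => mul_one x

lemma conv_j1S_comul :
    cmul μT (j1 K H ∘ₗ anti K H) (Coalgebra.comul) = j2 K H := by
  rw [← conv_j1_j2, ← cmul_assoc _ muT_assoc, conv_j1S_j1, one_cmul _ _ muT_onel]

lemma comul_anti_eq :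
    Coalgebra.comul ∘ₗ anti K H = swL K H ∘ₗ (Coalgebra.comul (R := K) (A := H)) := by
  refine (cinv_unique μT 1 muT_assoc muT_onel muT_oner (f := Coalgebra.comul)
    (h := swL K H ∘ₗ Coalgebra.comul) (g := Coalgebra.comul ∘ₗ anti K H) ?_
    (conv_comul_comulS (K := K) (H := H))).symm
  rw [← conv_j2S_j1S, ← conv_j1_j2, ← cmul_assoc _ muT_assoc]
  rw [cmul_assoc _ muT_assoc (j2 K H ∘ₗ anti K H), conv_j1S_j1, cmul_one _ _ muT_oner,
    conv_j2S_j2]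

lemma comul_anti (x : H) :
    Coalgebra.comul (R := K) (anti K H x) = swL K H (Coalgebra.comul (R := K) x) :=
  congrFun (congrArg DFunLike.coe (comul_anti_eq (K := K) (H := H))) x

end Chain
end B3

noncomputable section Twist
variable {K H : Type*} [Field K] [Ring H] [HopfAlgebra K H]

@[simp] lemma QJ_tmul (a b : H) : QJ K H (a ⊗ₜ b) = anti K H a * b := by
  simp [QJ]

@[simp] lemma QJinv_tmul (a b : H) : QJinv K H (a ⊗ₜ b) = a * anti K H b := by
  simp [QJinv]

@[simp] lemma epsId_tmul (a b : H) :
    epsId K H (a ⊗ₜ b) = Coalgebra.counit (R := K) a • b := by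
  simp [epsId]

@[simp] lemma idEps_tmul (a b : H) :
    idEps K H (a ⊗ₜ b) = Coalgebra.counit (R := K) b • a := by
  simp [idEps]

lemma comulId_tmul (a b : H) (r : Coalgebra.Repr K a (H × H)) :
    comulId K H (a ⊗ₜ b) = ∑ i ∈ r.index, r.left i ⊗ₜ[K] (r.right i ⊗ₜ[K] b) := by
  have : Bialgebra.comulAlgHom K H a = Coalgebra.comul (R := K) a := rfl
  simp only [comulId, AlgHom.coe_comp, AlgEquiv.toAlgHom_eq_coe, AlgHom.coe_coe,
    Function.comp_apply, Algebra.TensorProduct.map_tmul, AlgHom.coe_id, id_eq, this, ← r.eq]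
  rw [TensorProduct.sum_tmul, map_sum]
  simp [Algebra.TensorProduct.assoc_tmul]

lemma idComul_tmul (a b : H) (s : Coalgebra.Repr K b (H × H)) :
    idComul K H (a ⊗ₜ b) = ∑ j ∈ s.index, a ⊗ₜ[K] (s.left j ⊗ₜ[K] s.right j) := by
  have : Bialgebra.comulAlgHom K H b = Coalgebra.comul (R := K) b := rfl
  simp only [idComul, Algebra.TensorProduct.map_tmul, AlgHom.coe_id, id_eq, this, ← s.eq]
  rw [TensorProduct.tmul_sum]

variable (K H)

/-- `x ⊗ (y ⊗ z) ↦ S x * (y * S z)`. -/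
def chiM : H ⊗[K] (H ⊗[K] H) →ₗ[K] H :=
  LinearMap.mul' K H ∘ₗ LinearMap.lTensor H (LinearMap.mul' K H) ∘ₗ
    TensorProduct.map (anti K H) (TensorProduct.map LinearMap.id (anti K H))

/-- `x ⊗ (y ⊗ z) ↦ x * (S y * z)`. -/
def thM : H ⊗[K] (H ⊗[K] H) →ₗ[K] H :=
  LinearMap.mul' K H ∘ₗ LinearMap.lTensor H (LinearMap.mul' K H) ∘ₗ
    TensorProduct.map LinearMap.id (TensorProduct.map (anti K H) LinearMap.id)

/-- `x ⊗ (y ⊗ z) ↦ (S x * y) ⊗ z`. -/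
def rhoM : H ⊗[K] (H ⊗[K] H) →ₗ[K] H ⊗[K] H :=
  LinearMap.rTensor H (LinearMap.mul' K H ∘ₗ LinearMap.rTensor H (anti K H)) ∘ₗ
    (TensorProduct.assoc K H H H).symm.toLinearMap

/-- `x ⊗ (y ⊗ z) ↦ (S y ⊗ S x) * Δ z`. -/
def psiM : H ⊗[K] (H ⊗[K] H) →ₗ[K] H ⊗[K] H :=
  LinearMap.mul' K (H ⊗[K] H) ∘ₗ TensorProduct.map (swL K H) Coalgebra.comul ∘ₗ
    (TensorProduct.assoc K H H H).symm.toLinearMap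

/-- `a ⊗ b ↦ (S a ⊗ 1) * Δ b`. -/
def phiM : H ⊗[K] H →ₗ[K] H ⊗[K] H :=
  LinearMap.mul' K (H ⊗[K] H) ∘ₗ TensorProduct.map (j1 K H ∘ₗ anti K H) Coalgebra.comul

variable {K H}

@[simp] lemma chiM_tmul (x y z : H) :
    chiM K H (x ⊗ₜ (y ⊗ₜ z)) = anti K H x * (y * anti K H z) := by
  simp [chiM]

@[simp] lemma thM_tmul (x y z : H) :
    thM K H (x ⊗ₜ (y ⊗ₜ z)) = x * (anti K H y * z) := by
  simp [thM]

@[simp] lemma rhoM_tmul (x y z : H) :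
    rhoM K H (x ⊗ₜ (y ⊗ₜ z)) = (anti K H x * y) ⊗ₜ[K] z := by
  simp [rhoM]

@[simp] lemma psiM_tmul (x y z : H) :
    psiM K H (x ⊗ₜ (y ⊗ₜ z)) =
      (anti K H y ⊗ₜ[K] anti K H x) * Coalgebra.comul (R := K) z := by
  simp [psiM]

@[simp] lemma phiM_tmul (a b : H) :
    phiM K H (a ⊗ₜ b) = (anti K H a ⊗ₜ[K] (1 : H)) * Coalgebra.comul (R := K) b := by
  simp [phiM]

lemma phiM_comul (b : H) : phiM K H (Coalgebra.comul (R := K) b) = (1 : H) ⊗ₜ[K] b := by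
  have h := congrFun (congrArg DFunLike.coe (conv_j1S_comul (K := K) (H := H))) b
  simpa [cmul, phiM, LinearMap.mul'] using h

end Twist

noncomputable section TwistLemmas
variable {K H : Type*} [Field K] [Ring H] [HopfAlgebra K H]

lemma antipode_sum_eq {a : H} (r : Coalgebra.Repr K a (H × H)) :
    ∑ i ∈ r.index, anti K H (r.left i) * r.right i
      = Coalgebra.counit (R := K) a • (1 : H) := by
  rw [show (∑ i ∈ r.index, anti K H (r.left i) * r.right i)
      = ∑ i ∈ r.index, HopfAlgebra.antipode (R := K) (r.left i) * r.right i from rfl,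
    HopfAlgebra.sum_antipode_mul_eq_algebraMap_counit r, Algebra.algebraMap_eq_smul_one]

lemma sum_antipode_eq {a : H} (r : Coalgebra.Repr K a (H × H)) :
    ∑ i ∈ r.index, r.left i * anti K H (r.right i)
      = Coalgebra.counit (R := K) a • (1 : H) := by
  rw [show (∑ i ∈ r.index, r.left i * anti K H (r.right i))
      = ∑ i ∈ r.index, r.left i * HopfAlgebra.antipode (R := K) (r.right i) from rfl,
    HopfAlgebra.sum_mul_antipode_eq_algebraMap_counit r, Algebra.algebraMap_eq_smul_one]


@[simp] lemma QJ_zero : QJ K H (0 : H ⊗[K] H) = 0 := by simp [QJ]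
@[simp] lemma QJinv_zero : QJinv K H (0 : H ⊗[K] H) = 0 := by simp [QJinv]
@[simp] lemma QJ_add (x y : H ⊗[K] H) : QJ K H (x + y) = QJ K H x + QJ K H y := by
  simp [QJ, map_add]
@[simp] lemma QJinv_add (x y : H ⊗[K] H) : QJinv K H (x + y) = QJinv K H x + QJinv K H y := by
  simp [QJinv, map_add]

lemma chiM_idComul (u : H ⊗[K] H) :
    chiM K H (idComul K H u) = anti K H (idEps K H u) := by
  induction u using TensorProduct.induction_on with
  | zero => simp
  | add x y hx hy => simp [map_add, hx, hy]
  | tmul a b =>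
    set s : Coalgebra.Repr K b (H × H) := Coalgebra.Repr.arbitrary K b
    rw [idComul_tmul a b s, map_sum]
    simp only [chiM_tmul]
    rw [← Finset.mul_sum, sum_antipode_eq s]
    simp [mul_smul_comm, smul_mul_assoc]

lemma thM_idComul (u : H ⊗[K] H) :
    thM K H (idComul K H u) = idEps K H u := by
  induction u using TensorProduct.induction_on with
  | zero => simp
  | add x y hx hy => simp [map_add, hx, hy]
  | tmul a b =>
    set s : Coalgebra.Repr K b (H × H) := Coalgebra.Repr.arbitrary K b
    rw [idComul_tmul a b s, map_sum]
    simp only [thM_tmul]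
    rw [← Finset.mul_sum, antipode_sum_eq s]
    simp [mul_smul_comm, smul_mul_assoc]

lemma chiM_main (u v w : H ⊗[K] H) :
    chiM K H (comulId K H u * (Algebra.TensorProduct.assoc K K K H H H (v ⊗ₜ 1)) * ((1 : H) ⊗ₜ w))
      = QJ K H v * QJinv K H w * anti K H (epsId K H u) := by
  induction u using TensorProduct.induction_on with
  | zero => simp
  | add x y hx hy => simp [map_add, add_mul, mul_add, smul_add, hx, hy]
  | tmul a b =>
    induction v using TensorProduct.induction_on with
    | zero => simp
    | add x y hx hy =>
      simp [TensorProduct.add_tmul, map_add, mul_add, add_mul, smul_add, hx, hy]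
    | tmul c d =>
      induction w using TensorProduct.induction_on with
      | zero => simp
      | add x y hx hy =>
        rw [TensorProduct.tmul_add, mul_add, map_add, hx, hy, QJinv_add]
        simp [mul_add, add_mul]
      | tmul e f =>
        set r : Coalgebra.Repr K a (H × H) := Coalgebra.Repr.arbitrary K a
        rw [comulId_tmul a b r, Algebra.TensorProduct.assoc_tmul]
        rw [Finset.sum_mul, Finset.sum_mul, map_sum]
        have core : ∀ i ∈ r.index,
            chiM K H ((r.left i ⊗ₜ[K] (r.right i ⊗ₜ[K] b)) * (c ⊗ₜ[K] (d ⊗ₜ[K] (1 : H)))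
                * ((1 : H) ⊗ₜ[K] (e ⊗ₜ[K] f)))
            = anti K H c * ((anti K H (r.left i) * r.right i)
                * (d * (e * (anti K H f * anti K H b)))) := by
          intro i _
          simp [Algebra.TensorProduct.tmul_mul_tmul, anti_mul, mul_assoc]
        rw [Finset.sum_congr rfl core, ← Finset.mul_sum, ← Finset.sum_mul,
          antipode_sum_eq r]
        simp [epsId_tmul, map_smul, smul_mul_assoc, mul_smul_comm, mul_assoc]

end TwistLemmas

noncomputable section TwistLemmas2
variable {K H : Type*} [Field K] [Ring H] [HopfAlgebra K H]

lemma thM_main (u v w : H ⊗[K] H) :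
    thM K H (((1 : H) ⊗ₜ w) * (Algebra.TensorProduct.assoc K K K H H H (v ⊗ₜ 1)) * comulId K H u)
      = QJinv K H v * QJ K H w * epsId K H u := by
  induction u using TensorProduct.induction_on with
  | zero => simp
  | add x y hx hy => simp [map_add, add_mul, mul_add, smul_add, hx, hy]
  | tmul a b =>
    induction v using TensorProduct.induction_on with
    | zero => simp
    | add x y hx hy =>
      simp [TensorProduct.add_tmul, map_add, mul_add, add_mul, smul_add, hx, hy]
    | tmul c d =>
      induction w using TensorProduct.induction_on with
      | zero => simp
      | add x y hx hy =>
        rw [TensorProduct.tmul_add, add_mul, add_mul, map_add, hx, hy, QJ_add]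
        simp [mul_add, add_mul]
      | tmul e f =>
        set r : Coalgebra.Repr K a (H × H) := Coalgebra.Repr.arbitrary K a
        rw [comulId_tmul a b r, Algebra.TensorProduct.assoc_tmul, Finset.mul_sum, map_sum]
        have core : ∀ i ∈ r.index,
            thM K H ((((1 : H) ⊗ₜ[K] (e ⊗ₜ[K] f)) * (c ⊗ₜ[K] (d ⊗ₜ[K] (1 : H))))
                * (r.left i ⊗ₜ[K] (r.right i ⊗ₜ[K] b)))
            = c * ((r.left i * anti K H (r.right i))
                * (anti K H d * (anti K H e * (f * b)))) := by
          intro i _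
          simp [Algebra.TensorProduct.tmul_mul_tmul, anti_mul, mul_assoc]
        rw [Finset.sum_congr rfl core, ← Finset.mul_sum, ← Finset.sum_mul,
          sum_antipode_eq r]
        simp [epsId_tmul, smul_mul_assoc, mul_smul_comm, mul_assoc]

lemma rhoM_main1 (u v : H ⊗[K] H) :
    rhoM K H (comulId K H u * (Algebra.TensorProduct.assoc K K K H H H (v ⊗ₜ 1)))
      = QJ K H v ⊗ₜ[K] epsId K H u := by
  induction u using TensorProduct.induction_on with
  | zero => simp
  | add x y hx hy => simp [map_add, add_mul, TensorProduct.tmul_add, hx, hy]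
  | tmul a b =>
    induction v using TensorProduct.induction_on with
    | zero => simp
    | add x y hx hy =>
      simp [TensorProduct.add_tmul, map_add, mul_add, add_mul, hx, hy]
    | tmul c d =>
      set r : Coalgebra.Repr K a (H × H) := Coalgebra.Repr.arbitrary K a
      rw [comulId_tmul a b r, Algebra.TensorProduct.assoc_tmul, Finset.sum_mul, map_sum]
      have core : ∀ i ∈ r.index,
          rhoM K H ((r.left i ⊗ₜ[K] (r.right i ⊗ₜ[K] b)) * (c ⊗ₜ[K] (d ⊗ₜ[K] (1 : H))))
          = (anti K H c * ((anti K H (r.left i) * r.right i) * d)) ⊗ₜ[K] b := by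
        intro i _
        simp [Algebra.TensorProduct.tmul_mul_tmul, anti_mul, mul_assoc]
      rw [Finset.sum_congr rfl core, ← TensorProduct.sum_tmul, ← Finset.mul_sum,
        ← Finset.sum_mul, antipode_sum_eq r]
      simp [epsId_tmul, smul_mul_assoc, mul_smul_comm, TensorProduct.smul_tmul',
        TensorProduct.tmul_smul]

lemma rhoM_main2 (u v : H ⊗[K] H) :
    rhoM K H (idComul K H u * ((1 : H) ⊗ₜ v)) = phiM K H u * v := by
  induction u using TensorProduct.induction_on with
  | zero => simp
  | add x y hx hy => simp [map_add, add_mul, hx, hy]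
  | tmul a b =>
    induction v using TensorProduct.induction_on with
    | zero => simp
    | add x y hx hy => simp [TensorProduct.tmul_add, map_add, mul_add, hx, hy]
    | tmul c d =>
      set s : Coalgebra.Repr K b (H × H) := Coalgebra.Repr.arbitrary K b
      rw [idComul_tmul a b s, Finset.sum_mul, map_sum]
      have core : ∀ j ∈ s.index,
          rhoM K H ((a ⊗ₜ[K] (s.left j ⊗ₜ[K] s.right j)) * ((1 : H) ⊗ₜ[K] (c ⊗ₜ[K] d)))
          = ((anti K H a * s.left j) ⊗ₜ[K] s.right j) * (c ⊗ₜ[K] d) := by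
        intro j _
        simp [Algebra.TensorProduct.tmul_mul_tmul, mul_assoc]
      rw [Finset.sum_congr rfl core, ← Finset.sum_mul]
      congr 1
      rw [phiM_tmul, ← s.eq, Finset.mul_sum]
      refine Finset.sum_congr rfl fun j _ => ?_
      simp [Algebra.TensorProduct.tmul_mul_tmul]

variable (K H) in
/-- `a ⊗ b ↦ ((S ⊗ S) τ Δ a) * Δ b`. -/
noncomputable def thetaM : H ⊗[K] H →ₗ[K] H ⊗[K] H :=
  LinearMap.mul' K (H ⊗[K] H) ∘ₗ
    TensorProduct.map (swL K H ∘ₗ Coalgebra.comul) Coalgebra.comul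

@[simp] lemma thetaM_tmul (a b : H) :
    thetaM K H (a ⊗ₜ b)
      = swL K H (Coalgebra.comul (R := K) a) * Coalgebra.comul (R := K) b := by
  simp [thetaM]

lemma psiM_main1 (u v : H ⊗[K] H) :
    psiM K H (comulId K H u * (Algebra.TensorProduct.assoc K K K H H H (v ⊗ₜ 1)))
      = swL K H v * thetaM K H u := by
  induction u using TensorProduct.induction_on with
  | zero => simp
  | add x y hx hy => simp [map_add, add_mul, mul_add, hx, hy]
  | tmul a b =>
    induction v using TensorProduct.induction_on with
    | zero => simp
    | add x y hx hy =>
      simp [TensorProduct.add_tmul, map_add, mul_add, add_mul, hx, hy]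
    | tmul c d =>
      set r : Coalgebra.Repr K a (H × H) := Coalgebra.Repr.arbitrary K a
      rw [comulId_tmul a b r, Algebra.TensorProduct.assoc_tmul, Finset.sum_mul, map_sum]
      have core : ∀ i ∈ r.index,
          psiM K H ((r.left i ⊗ₜ[K] (r.right i ⊗ₜ[K] b)) * (c ⊗ₜ[K] (d ⊗ₜ[K] (1 : H))))
          = (anti K H d ⊗ₜ[K] anti K H c) *
              ((anti K H (r.right i) ⊗ₜ[K] anti K H (r.left i))
                * Coalgebra.comul (R := K) b) := by
        intro i _
        simp [Algebra.TensorProduct.tmul_mul_tmul, anti_mul, ← mul_assoc]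
      rw [Finset.sum_congr rfl core, ← Finset.mul_sum, ← Finset.sum_mul]
      have hswl : ∑ i ∈ r.index, anti K H (r.right i) ⊗ₜ[K] anti K H (r.left i)
          = swL K H (Coalgebra.comul (R := K) a) := by
        rw [← r.eq, map_sum]; simp
      rw [hswl, thetaM_tmul, swL_tmul]

lemma thetaM_eq_comul_QJ (u : H ⊗[K] H) :
    thetaM K H u = Coalgebra.comul (R := K) (QJ K H u) := by
  induction u using TensorProduct.induction_on with
  | zero => simp
  | add x y hx hy => simp [map_add, hx, hy]
  | tmul a b => rw [thetaM_tmul, QJ_tmul, Bialgebra.comul_mul, ← comul_anti]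

lemma psiM_main2 (u v : H ⊗[K] H) :
    psiM K H (idComul K H u * ((1 : H) ⊗ₜ v)) = ((1 : H) ⊗ₜ[K] QJ K H u) * phiM K H v := by
  induction u using TensorProduct.induction_on with
  | zero => simp
  | add x y hx hy => simp [map_add, add_mul, mul_add, TensorProduct.tmul_add, hx, hy]
  | tmul a b =>
    induction v using TensorProduct.induction_on with
    | zero => simp
    | add x y hx hy => simp [TensorProduct.tmul_add, map_add, mul_add, hx, hy]
    | tmul c d =>
      set s : Coalgebra.Repr K b (H × H) := Coalgebra.Repr.arbitrary K b
      rw [idComul_tmul a b s, Finset.sum_mul, map_sum]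
      have core : ∀ j ∈ s.index,
          psiM K H ((a ⊗ₜ[K] (s.left j ⊗ₜ[K] s.right j)) * ((1 : H) ⊗ₜ[K] (c ⊗ₜ[K] d)))
          = ((anti K H c ⊗ₜ[K] anti K H a) *
              ((anti K H (s.left j) ⊗ₜ[K] (1 : H)) * Coalgebra.comul (R := K) (s.right j)))
              * Coalgebra.comul (R := K) d := by
        intro j _
        simp [Algebra.TensorProduct.tmul_mul_tmul, anti_mul, Bialgebra.comul_mul, ← mul_assoc]
      rw [Finset.sum_congr rfl core, ← Finset.sum_mul, ← Finset.mul_sum]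
      have hphi : ∑ j ∈ s.index,
          (anti K H (s.left j) ⊗ₜ[K] (1 : H)) * Coalgebra.comul (R := K) (s.right j)
          = (1 : H) ⊗ₜ[K] b := by
        rw [← phiM_comul (K := K) b, ← s.eq, map_sum]
        exact Finset.sum_congr rfl fun j _ => by rw [phiM_tmul]
      rw [hphi, phiM_tmul, QJ_tmul]
      simp [Algebra.TensorProduct.tmul_mul_tmul, ← mul_assoc]

end TwistLemmas2

noncomputable section Final
variable {K H : Type*} [Field K] [Ring H] [HopfAlgebra K H]

lemma swL_mul (x y : H ⊗[K] H) : swL K H (x * y) = swL K H y * swL K H x := by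
  induction x using TensorProduct.induction_on with
  | zero => simp
  | add x₁ x₂ h1 h2 => simp [add_mul, mul_add, h1, h2]
  | tmul a b =>
    induction y using TensorProduct.induction_on with
    | zero => simp
    | add y₁ y₂ h1 h2 => simp [add_mul, mul_add, h1, h2]
    | tmul c d => simp [Algebra.TensorProduct.tmul_mul_tmul, anti_mul]

lemma swL_one : swL K H (1 : H ⊗[K] H) = 1 := by
  rw [Algebra.TensorProduct.one_def, swL_tmul, anti_one, ← Algebra.TensorProduct.one_def]

lemma swL_swL (x : H ⊗[K] H) :
    swL K H (swL K H x)
      = TensorProduct.map (anti K H ∘ₗ anti K H) (anti K H ∘ₗ anti K H) x := by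
  induction x using TensorProduct.induction_on with
  | zero => simp
  | add x₁ x₂ h1 h2 => simp [map_add, h1, h2]
  | tmul a b => simp

lemma one_tmul_mul (x y : H ⊗[K] H) :
    (((1 : H) ⊗ₜ[K] x) * ((1 : H) ⊗ₜ[K] y) : H ⊗[K] (H ⊗[K] H)) = (1 : H) ⊗ₜ[K] (x * y) := by
  rw [Algebra.TensorProduct.tmul_mul_tmul, one_mul]

theorem comul_uJ' (J J' : H ⊗[K] H)
    (hJ : J * J' = 1) (hJ' : J' * J = 1)
    (hC : comulId K H J * (Algebra.TensorProduct.assoc K K K H H H (J ⊗ₜ 1)) =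
      idComul K H J * ((1 : H) ⊗ₜ J))
    (hn1 : epsId K H J = 1) (hn2 : idEps K H J = 1) :
    Coalgebra.comul (R := K) (QJinv K H J' * anti K H (QJ K H J)) =
      J * ((QJinv K H J' * anti K H (QJ K H J)) ⊗ₜ (QJinv K H J' * anti K H (QJ K H J))) *
        TensorProduct.map (anti K H ∘ₗ anti K H) (anti K H ∘ₗ anti K H) J' := by
  set Q := QJ K H J with hQdef
  set P := QJinv K H J' with hPdef
  -- normalization for J'
  have hε1' : epsId K H J' = 1 := by
    have := map_mul (epsId K H) J J'
    rw [hJ, map_one, hn1, one_mul] at this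
    exact this.symm
  have hε2' : idEps K H J' = 1 := by
    have := map_mul (idEps K H) J J'
    rw [hJ, map_one, hn2, one_mul] at this
    exact this.symm
  -- Q * P = 1
  have hQP : Q * P = 1 := by
    have h1 := congrArg (fun t => chiM K H (t * ((1 : H) ⊗ₜ J'))) hC
    beta_reduce at h1
    rw [chiM_main J J J', mul_assoc (idComul K H J), one_tmul_mul, hJ,
      ← Algebra.TensorProduct.one_def, mul_one, chiM_idComul, hn1, hn2, anti_one, mul_one] at h1
    exact h1
  -- inverse cocycle identity
  have hc' : (Algebra.TensorProduct.assoc K K K H H H (J' ⊗ₜ 1)) * comulId K H J' =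
      ((1 : H) ⊗ₜ J') * idComul K H J' := by
    have e1 : (idComul K H J * ((1 : H) ⊗ₜ J)) * (((1 : H) ⊗ₜ J') * idComul K H J') = 1 := by
      rw [mul_assoc, ← mul_assoc ((1 : H) ⊗ₜ J : H ⊗[K] (H ⊗[K] H)), one_tmul_mul, hJ,
        ← Algebra.TensorProduct.one_def, one_mul, ← map_mul, hJ, map_one]
    have e2 : ((Algebra.TensorProduct.assoc K K K H H H (J' ⊗ₜ 1)) * comulId K H J') *
        (comulId K H J * (Algebra.TensorProduct.assoc K K K H H H (J ⊗ₜ 1))) = 1 := by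
      rw [mul_assoc, ← mul_assoc (comulId K H J'), ← map_mul, hJ', map_one, one_mul,
        ← map_mul, Algebra.TensorProduct.tmul_mul_tmul, hJ', one_mul,
        ← Algebra.TensorProduct.one_def, map_one]
    calc (Algebra.TensorProduct.assoc K K K H H H (J' ⊗ₜ 1)) * comulId K H J'
        = ((Algebra.TensorProduct.assoc K K K H H H (J' ⊗ₜ 1)) * comulId K H J') *
            ((idComul K H J * ((1 : H) ⊗ₜ J)) * (((1 : H) ⊗ₜ J') * idComul K H J')) := by
          rw [e1, mul_one]
      _ = ((Algebra.TensorProduct.assoc K K K H H H (J' ⊗ₜ 1)) * comulId K H J') *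
            ((comulId K H J * (Algebra.TensorProduct.assoc K K K H H H (J ⊗ₜ 1))) *
              (((1 : H) ⊗ₜ J') * idComul K H J')) := by rw [← hC]
      _ = (((Algebra.TensorProduct.assoc K K K H H H (J' ⊗ₜ 1)) * comulId K H J') *
            (comulId K H J * (Algebra.TensorProduct.assoc K K K H H H (J ⊗ₜ 1)))) *
              (((1 : H) ⊗ₜ J') * idComul K H J') := by rw [← mul_assoc]
      _ = ((1 : H) ⊗ₜ J') * idComul K H J' := by rw [e2, one_mul]
  -- P * Q = 1
  have hPQ : P * Q = 1 := by
    have h1 := congrArg (fun t => thM K H (((1 : H) ⊗ₜ J) * t)) hc'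
    beta_reduce at h1
    rw [← mul_assoc ((1 : H) ⊗ₜ J : H ⊗[K] (H ⊗[K] H)), thM_main J' J' J,
      ← mul_assoc ((1 : H) ⊗ₜ J : H ⊗[K] (H ⊗[K] H)), one_tmul_mul, hJ,
      ← Algebra.TensorProduct.one_def, one_mul, thM_idComul, hε1', hε2', mul_one] at h1
    exact h1
  -- phiM J = (Q ⊗ 1) * J'
  have hPhi : phiM K H J = (Q ⊗ₜ[K] (1 : H)) * J' := by
    have h1 := congrArg (rhoM K H) hC
    rw [rhoM_main1 J J, rhoM_main2 J J, hn1] at h1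
    have h2 := congrArg (fun t => t * J') h1.symm
    beta_reduce at h2
    rw [mul_assoc, hJ, mul_one] at h2
    exact h2
  -- swL inverses
  have hswJ'J : swL K H J' * swL K H J = 1 := by rw [← swL_mul, hJ, swL_one]
  have hswJJ' : swL K H J * swL K H J' = 1 := by rw [← swL_mul, hJ', swL_one]
  -- comul Q
  have hΔQ : Coalgebra.comul (R := K) Q = swL K H J' * (Q ⊗ₜ[K] Q) * J' := by
    have h1 := congrArg (psiM K H) hC
    rw [psiM_main1 J J, psiM_main2 J J, thetaM_eq_comul_QJ, hPhi, ← hQdef] at h1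
    have h2 : swL K H J * Coalgebra.comul (R := K) Q = (Q ⊗ₜ[K] Q) * J' := by
      rw [h1, ← mul_assoc, Algebra.TensorProduct.tmul_mul_tmul, one_mul, mul_one]
    calc Coalgebra.comul (R := K) Q
        = (swL K H J' * swL K H J) * Coalgebra.comul (R := K) Q := by rw [hswJ'J, one_mul]
      _ = swL K H J' * (swL K H J * Coalgebra.comul (R := K) Q) := by rw [mul_assoc]
      _ = swL K H J' * ((Q ⊗ₜ[K] Q) * J') := by rw [h2]
      _ = swL K H J' * (Q ⊗ₜ[K] Q) * J' := by rw [mul_assoc]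
  -- comul P
  have hPQc : Coalgebra.comul (R := K) P * Coalgebra.comul (R := K) Q = 1 := by
    rw [← Bialgebra.comul_mul, hPQ, Bialgebra.comul_one]
  have hQY : Coalgebra.comul (R := K) Q * (J * (P ⊗ₜ[K] P) * swL K H J) = 1 := by
    rw [hΔQ]
    simp only [mul_assoc]
    rw [← mul_assoc J' J, hJ', one_mul, ← mul_assoc (Q ⊗ₜ[K] Q) (P ⊗ₜ[K] P),
      Algebra.TensorProduct.tmul_mul_tmul, hQP, ← Algebra.TensorProduct.one_def, one_mul,
      hswJ'J]
  have hΔP : Coalgebra.comul (R := K) P = J * (P ⊗ₜ[K] P) * swL K H J := by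
    calc Coalgebra.comul (R := K) P
        = Coalgebra.comul (R := K) P *
            (Coalgebra.comul (R := K) Q * (J * (P ⊗ₜ[K] P) * swL K H J)) := by
          rw [hQY, mul_one]
      _ = (Coalgebra.comul (R := K) P * Coalgebra.comul (R := K) Q) *
            (J * (P ⊗ₜ[K] P) * swL K H J) := by rw [← mul_assoc]
      _ = J * (P ⊗ₜ[K] P) * swL K H J := by rw [hPQc, one_mul]
  -- comul (anti Q)
  have hΔSQ : Coalgebra.comul (R := K) (anti K H Q) =
      swL K H J' * ((anti K H Q ⊗ₜ[K] anti K H Q) *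
        TensorProduct.map (anti K H ∘ₗ anti K H) (anti K H ∘ₗ anti K H) J') := by
    rw [comul_anti, hΔQ, swL_mul, swL_mul, swL_tmul, swL_swL]
  -- conclusion
  rw [Bialgebra.comul_mul, hΔP, comul_anti, hΔQ, swL_mul, swL_mul, swL_tmul, swL_swL]
  simp only [mul_assoc]
  rw [← mul_assoc (swL K H J) (swL K H J'), hswJJ', one_mul,
    ← mul_assoc (P ⊗ₜ[K] P) (anti K H Q ⊗ₜ[K] anti K H Q),
    Algebra.TensorProduct.tmul_mul_tmul]

end Final

variable {K H : Type*} [Field K] [Ring H] [HopfAlgebra K H]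

theorem comul_uJ (hS : Function.Bijective (anti K H))
    (J J' : H ⊗[K] H)
    (hJ : J * J' = 1) (hJ' : J' * J = 1) (hc : IsTwist K H J) (hn : IsNormalized K H J) :
    Coalgebra.comul (R := K) (QJinv K H J' * anti K H (QJ K H J)) =
      J * ((QJinv K H J' * anti K H (QJ K H J)) ⊗ₜ (QJinv K H J' * anti K H (QJ K H J))) *
        TensorProduct.map (anti K H ∘ₗ anti K H) (anti K H ∘ₗ anti K H) J' :=
  comul_uJ' J J' hJ hJ' hc hn.1 hn.2
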